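/- arXiv:2605.03347 — 2 statements merged into one kernel-verified Lean document; each statement's English description precedes it below -/
import Mathlib

section
/- Let P_n be the path graph on n ≥ 2 vertices. Then the ordered matching number of P_n equals ⌊n/2⌋. -/
/-- An ordered matching of size `s` in `G`, given by edges `{u i, v i}`:
the edges form a matching (all `2s` endpoints are distinct), `{u 1,…,u s}` is an
independent set, and `{u i, v j} ∈ E(G)` implies `i ≤ j`. -/
def IsOrderedMatching {V : Type*} (G : SimpleGraph V) {s : ℕ} (u v : Fin s → V) : Prop :=
  (∀ i, G.Adj (u i) (v i)) ∧
  (Function.Injective (fun p : Fin s × Bool => if p.2 then u p.1 else v p.1)) ∧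
  (∀ i j, ¬ G.Adj (u i) (u j)) ∧
  (∀ i j, G.Adj (u i) (v j) → i ≤ j)

/-- The ordered matching number `ν₀(G)`: the maximum size of an ordered matching in `G`. -/
noncomputable def orderedMatchingNumber {V : Type*} (G : SimpleGraph V) : ℕ :=
  sSup {s : ℕ | ∃ u v : Fin s → V, IsOrderedMatching G u v}

/-- The ordered matching number of the path graph `P_n` (`n ≥ 2`) is `⌊n/2⌋`. -/
theorem orderedMatchingNumber_pathGraph (n : ℕ) (hn : 2 ≤ n) :
    orderedMatchingNumber (SimpleGraph.pathGraph n) = n / 2 := by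
  have hub : ∀ s ∈ {s : ℕ | ∃ u v : Fin s → Fin n,
      IsOrderedMatching (SimpleGraph.pathGraph n) u v}, s ≤ n / 2 := by
    rintro s ⟨u, v, hadj, hinj, -, -⟩
    have hcard := Fintype.card_le_of_injective _ hinj
    simp [Fintype.card_prod] at hcard
    omega
  -- membership: u i = 2i+1, v i = 2i
  have hlt : ∀ i : Fin (n / 2), 2 * i.val + 1 < n := by
    intro i
    have := i.isLt
    omega
  have hmem : (n / 2) ∈ {s : ℕ | ∃ u v : Fin s → Fin n,
      IsOrderedMatching (SimpleGraph.pathGraph n) u v} := by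
    refine ⟨fun i => ⟨2 * i.val + 1, hlt i⟩, fun i => ⟨2 * i.val, by have := hlt i; omega⟩,
      ?_, ?_, ?_, ?_⟩
    · intro i
      rw [SimpleGraph.pathGraph_adj]
      right; rfl
    · rintro ⟨i, b⟩ ⟨j, c⟩ h
      simp only at h
      rcases b <;> rcases c <;> simp_all <;> first | exact Fin.ext h | omega
    · intro i j h
      rw [SimpleGraph.pathGraph_adj] at h
      simp only [Fin.val_mk] at h
      omega
    · intro i j h
      rw [SimpleGraph.pathGraph_adj] at h
      simp only [Fin.val_mk] at h
      have : i.val ≤ j.val := by omega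
      exact this
  exact le_antisymm (csSup_le ⟨n / 2, hmem⟩ hub) (le_csSup ⟨n / 2, hub⟩ hmem)
end

section
/- Let K be a field, n ≥ 2, R = K[x_1,…,x_n], P_n the path graph, and t ≥ 1 an integer. For a monomial f = x_1^{a_1}···x_n^{a_n} ∉ J(P_n)^t, set S(f) = { i ∈ {1,…,n−1} : a_i + a_{i+1} ≤ t − 1 }. Then the radical of the colon ideal satisfies √(J(P_n)^t : f) = ⋂_{i ∈ S(f)} (x_i, x_{i+1}). -/
open MvPolynomial

/-- The cover ideal `J(G) = ⋂_{{u,v} ∈ E(G)} (x_u, x_v)` of a graph `G` on `{1,…,n}`,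
inside `R = K[x_1,…,x_n]`. -/
noncomputable def coverIdeal (K : Type*) [Field K] {n : ℕ} (G : SimpleGraph (Fin n)) :
    Ideal (MvPolynomial (Fin n) K) :=
  ⨅ (u : Fin n) (v : Fin n) (_ : G.Adj u v), Ideal.span {X u, X v}

section Aux

variable {K : Type*} [Field K] {n : ℕ}

lemma mem_span_pair_iff (u v : Fin n) (p : MvPolynomial (Fin n) K) :
    p ∈ Ideal.span {X u, X v} ↔ ∀ m ∈ p.support, m u ≠ 0 ∨ m v ≠ 0 := by
  rw [show ({X u, X v} : Set (MvPolynomial (Fin n) K)) = X '' {u, v} by rw [Set.image_pair],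
    mem_ideal_span_X_image]
  refine forall₂_congr fun m _ => ?_
  simp [Set.mem_insert_iff, or_and_right, exists_or]

lemma monomial_mem_span_pair_iff (u v : Fin n) (c : Fin n →₀ ℕ) :
    monomial c (1 : K) ∈ Ideal.span {X u, X v} ↔ c u ≠ 0 ∨ c v ≠ 0 := by
  classical
  rw [mem_span_pair_iff]
  rw [support_monomial]
  simp

lemma support_mem_pow_span_pair (u v : Fin n) :
    ∀ (t : ℕ) (p : MvPolynomial (Fin n) K), p ∈ (Ideal.span {X u, X v}) ^ t →
      ∀ m ∈ p.support, t ≤ m u + m v := by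
  intro t
  induction t with
  | zero => intro p _ m _; exact Nat.zero_le _
  | succ t ih =>
    intro p hp
    rw [pow_succ] at hp
    refine Submodule.mul_induction_on hp ?_ ?_
    · intro x hx y hy m hm
      classical
      obtain ⟨mx, hmx, my, hmy, rfl⟩ := Finset.mem_add.mp (support_mul x y hm)
      have h1 := ih x hx mx hmx
      have h2 := (mem_span_pair_iff u v y).mp hy my hmy
      simp only [Finsupp.add_apply]
      omega
    · intro x y hx hy m hm
      classical
      rcases Finset.mem_union.mp (support_add hm) with h | h
      exacts [hx m h, hy m h]

lemma coeff_aeval_kill (u v : Fin n) (g : MvPolynomial (Fin n) K) (m : Fin n →₀ ℕ)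
    (hmu : m u = 0) (hmv : m v = 0) :
    coeff m (aeval (fun w : Fin n =>
        if w = u ∨ w = v then (0 : MvPolynomial (Fin n) K) else X w) g) = coeff m g := by
  classical
  set f : Fin n → MvPolynomial (Fin n) K :=
    fun w => if w = u ∨ w = v then 0 else X w with hf
  have hterm : ∀ m' : Fin n →₀ ℕ, ∀ c : K,
      coeff m (aeval f (monomial m' c)) = if m' = m then c else 0 := by
    intro m' c
    by_cases h : m' u = 0 ∧ m' v = 0
    · have : aeval f (monomial m' c) = monomial m' c := by
        rw [aeval_monomial, monomial_eq]
        congr 1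
        refine Finsupp.prod_congr fun w hw => ?_
        have hwu : w ≠ u := fun e => by simp [e, h.1] at hw
        have hwv : w ≠ v := fun e => by simp [e, h.2] at hw
        simp [hf, hwu, hwv]
      rw [this, coeff_monomial]
    · have hmem : (u ∈ m'.support ∧ f u = 0) ∨ (v ∈ m'.support ∧ f v = 0) := by
        rcases not_and_or.mp h with h' | h'
        · exact Or.inl ⟨Finsupp.mem_support_iff.mpr h', by simp [hf]⟩
        · exact Or.inr ⟨Finsupp.mem_support_iff.mpr h', by simp [hf]⟩
      have hzero : aeval f (monomial m' c) = 0 := by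
        rw [aeval_monomial]
        have : (m'.prod fun w e => f w ^ e) = 0 := by
          rcases hmem with ⟨hw, hfw⟩ | ⟨hw, hfw⟩
          · refine Finset.prod_eq_zero hw ?_
            show f u ^ m' u = 0
            rw [hfw]
            exact zero_pow (by simpa using Finsupp.mem_support_iff.mp hw)
          · refine Finset.prod_eq_zero hw ?_
            show f v ^ m' v = 0
            rw [hfw]
            exact zero_pow (by simpa using Finsupp.mem_support_iff.mp hw)
        rw [this, mul_zero]
      rw [hzero]
      have hne : m' ≠ m := by
        rintro rfl
        exact h ⟨hmu, hmv⟩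
      simp [hne]
  conv_lhs => rw [g.as_sum, map_sum]
  rw [coeff_sum]
  simp only [hterm]
  rw [Finset.sum_ite_eq' g.support m (fun m' => coeff m' g)]
  split
  · rfl
  · next h => exact (notMem_support_iff.mp h).symm

lemma radical_span_pair (u v : Fin n) :
    (Ideal.span {X u, X v} : Ideal (MvPolynomial (Fin n) K)).radical
      = Ideal.span {X u, X v} := by
  classical
  refine le_antisymm ?_ Ideal.le_radical
  intro g hg
  obtain ⟨k, hk⟩ := hg
  set f : Fin n → MvPolynomial (Fin n) K :=
    fun w => if w = u ∨ w = v then 0 else X w with hf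
  have hker : ∀ q ∈ Ideal.span ({X u, X v} : Set (MvPolynomial (Fin n) K)), aeval f q = 0 := by
    intro q hq
    have : Ideal.span ({X u, X v} : Set (MvPolynomial (Fin n) K)) ≤
        RingHom.ker (aeval f : MvPolynomial (Fin n) K →ₐ[K] MvPolynomial (Fin n) K) := by
      rw [Ideal.span_le]
      rintro x (rfl | rfl) <;> simp [RingHom.mem_ker, hf]
    exact this hq
  have hgk : (aeval f g) ^ k = 0 := by rw [← map_pow]; exact hker _ hk
  have hk0 : k ≠ 0 := by
    rintro rfl
    simp only [pow_zero] at hgk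
    exact one_ne_zero hgk
  have hg0 : aeval f g = 0 := pow_eq_zero_iff hk0 |>.mp hgk
  rw [mem_span_pair_iff]
  intro m hm
  by_contra hcon
  push_neg at hcon
  have := coeff_aeval_kill u v g m hcon.1 hcon.2
  rw [hg0] at this
  simp only [coeff_zero] at this
  exact mem_support_iff.mp hm this.symm

/-- The greedy 0/1 choice used to build a vertex cover of the path. -/
private def greedy (c : ℕ → ℕ) : ℕ → ℕ
  | 0 => min (c 0) 1
  | i + 1 => if greedy c i = 0 then 1 else if c (i + 2) = 0 then 1 else 0

private lemma greedy_le_one (c : ℕ → ℕ) (i : ℕ) : greedy c i ≤ 1 := by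
  cases i with
  | zero => simp [greedy]
  | succ i => simp only [greedy]; split <;> [omega; skip]; split <;> omega

private lemma greedy_inv0 {t : ℕ} (c : ℕ → ℕ) (H : ∀ i, t + 1 ≤ c i + c (i + 1))
    (i : ℕ) (h : greedy c i = 0) : 1 ≤ c (i + 1) := by
  cases i with
  | zero =>
    have h0 : c 0 = 0 := by simpa [greedy] using h
    have := H 0
    omega
  | succ i =>
    have e2 : c (i + 1 + 1) = c (i + 2) := rfl
    simp only [greedy] at h
    split at h
    · omega
    · split at h
      · omega
      · next h2 => omega

private lemma greedy_le {t : ℕ} (c : ℕ → ℕ) (H : ∀ i, t + 1 ≤ c i + c (i + 1)) (i : ℕ) :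
    greedy c i ≤ c i := by
  cases i with
  | zero => simp [greedy]
  | succ i =>
    simp only [greedy]
    split
    · next h => have := greedy_inv0 c H i h; omega
    · split
      · next h' =>
        have e2 : c (i + 1 + 1) = c (i + 2) := rfl
        have := H (i + 1)
        omega
      · omega

private lemma greedy_cover (c : ℕ → ℕ) (i : ℕ) :
    1 ≤ greedy c i + greedy c (i + 1) := by
  by_cases h : greedy c i = 0
  · simp only [greedy, h, if_pos]
    omega
  · omega

private lemma greedy_upper {t : ℕ} (c : ℕ → ℕ) (H : ∀ i, t + 1 ≤ c i + c (i + 1)) (i : ℕ) :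
    greedy c i + greedy c (i + 1) + t ≤ c i + c (i + 1) := by
  have hle1 := greedy_le_one c i
  have hHi := H i
  show greedy c i + greedy c (i + 1) + t ≤ c i + c (i + 1)
  have : greedy c (i + 1) = if greedy c i = 0 then 1 else if c (i + 2) = 0 then 1 else 0 := rfl
  rw [this]
  split
  · next h => omega
  · split
    · next h h' =>
      have e2 : c (i + 1 + 1) = c (i + 2) := rfl
      have h1 : c i ≥ 1 := by have := greedy_le c H i; omega
      have h2 : t + 1 ≤ c (i + 1) := by have := H (i + 1); omega
      omega
    · omega

lemma key_lemma (t : ℕ) :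
    ∀ c : Fin n →₀ ℕ, (∀ u v : Fin n, (SimpleGraph.pathGraph n).Adj u v → t ≤ c u + c v) →
      monomial c (1 : K) ∈ (coverIdeal K (SimpleGraph.pathGraph n)) ^ t := by
  induction t with
  | zero => intro c _; simp
  | succ t ih =>
    intro c hc
    classical
    set cn : ℕ → ℕ := fun i => if h : i < n then c ⟨i, h⟩ else t + 1 with hcn
    have H : ∀ i, t + 1 ≤ cn i + cn (i + 1) := by
      intro i
      by_cases h1 : i + 1 < n
      · have hi : i < n := by omega
        have hadj : (SimpleGraph.pathGraph n).Adj ⟨i, hi⟩ ⟨i + 1, h1⟩ :=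
          SimpleGraph.pathGraph_adj.mpr (Or.inl rfl)
        have := hc _ _ hadj
        simp only [hcn, hi, h1, dif_pos]
        exact this
      · have h2 : cn (i + 1) = t + 1 := by simp [hcn, h1]
        omega
    set b : Fin n →₀ ℕ := Finsupp.equivFunOnFinite.symm (fun i : Fin n => greedy cn i.val)
      with hbdef
    have hb_apply : ∀ i : Fin n, b i = greedy cn i.val := fun i => rfl
    have hble : ∀ i : Fin n, b i ≤ c i := by
      intro i
      have h1 := greedy_le cn H i.val
      have h2 : cn i.val = c i := by simp [hcn, i.isLt]
      rw [hb_apply]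
      omega
    have hsub : b ≤ c := Finsupp.le_def.mpr hble
    have key1 : monomial b (1 : K) ∈ coverIdeal K (SimpleGraph.pathGraph n) := by
      rw [coverIdeal]
      simp only [Ideal.mem_iInf]
      intro u v hadj
      rw [monomial_mem_span_pair_iff]
      rcases SimpleGraph.pathGraph_adj.mp hadj with h | h
      · have := greedy_cover cn u.val
        rw [hb_apply, hb_apply]
        have hv : v.val = u.val + 1 := h.symm
        rw [hv]
        omega
      · have := greedy_cover cn v.val
        rw [hb_apply, hb_apply]
        have hu : u.val = v.val + 1 := h.symm
        rw [hu]
        omega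
    have key2 : monomial (c - b) (1 : K) ∈ (coverIdeal K (SimpleGraph.pathGraph n)) ^ t := by
      apply ih
      intro u v hadj
      rw [Finsupp.tsub_apply, Finsupp.tsub_apply]
      rcases SimpleGraph.pathGraph_adj.mp hadj with h | h
      · have h4 := greedy_upper cn H u.val
        have hv : v.val = u.val + 1 := h.symm
        have hcu : cn u.val = c u := by simp [hcn, u.isLt]
        have hcv : cn (u.val + 1) = c v := by
          rw [← hv]; simp [hcn, v.isLt]
        have hbu : b u = greedy cn u.val := hb_apply u
        have hbv : b v = greedy cn (u.val + 1) := by rw [hb_apply, hv]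
        have h5 := hble u
        have h6 := hble v
        omega
      · have h4 := greedy_upper cn H v.val
        have hu : u.val = v.val + 1 := h.symm
        have hcv : cn v.val = c v := by simp [hcn, v.isLt]
        have hcu : cn (v.val + 1) = c u := by
          rw [← hu]; simp [hcn, u.isLt]
        have hbv : b v = greedy cn v.val := hb_apply v
        have hbu : b u = greedy cn (v.val + 1) := by rw [hb_apply, hu]
        have h5 := hble u
        have h6 := hble v
        omega
    have heq : monomial c (1 : K) = monomial b 1 * monomial (c - b) 1 := by
      rw [monomial_mul, one_mul, add_tsub_cancel_of_le hsub]
    rw [heq, pow_succ']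
    exact Ideal.mul_mem_mul key1 key2

end Aux

/-- For a monomial `f = x_1^{a_1} ⋯ x_n^{a_n} ∉ J(P_n)^t`, the radical of the colon ideal
`(J(P_n)^t : f)` is the intersection of the edge ideals `(x_i, x_{i+1})` over exactly those
edges `{i, i+1}` of the path with `a_i + a_{i+1} ≤ t - 1`. -/
theorem radical_colon_coverIdeal_pow_pathGraph (K : Type*) [Field K] (n t : ℕ)
    (hn : 2 ≤ n) (ht : 1 ≤ t) (a : Fin n →₀ ℕ)
    (hf : (monomial a (1 : K)) ∉ (coverIdeal K (SimpleGraph.pathGraph n)) ^ t) :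
    (((coverIdeal K (SimpleGraph.pathGraph n)) ^ t).colon
        (Ideal.span {monomial a (1 : K)})).radical
      = ⨅ (u : Fin n) (v : Fin n) (_ : (SimpleGraph.pathGraph n).Adj u v)
          (_ : a u + a v ≤ t - 1), Ideal.span {X u, X v} := by
  classical
  apply le_antisymm
  · refine le_iInf fun u => le_iInf fun v => le_iInf fun hadj => le_iInf fun hle => ?_
    have h1 : ((coverIdeal K (SimpleGraph.pathGraph n)) ^ t).colon
        (Ideal.span {monomial a (1 : K)}) ≤ Ideal.span {X u, X v} := by
      intro g hg
      rw [Ideal.mem_colon_span_singleton] at hg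
      have hJle : coverIdeal K (SimpleGraph.pathGraph n) ≤ Ideal.span {X u, X v} :=
        iInf_le_of_le u (iInf_le_of_le v (iInf_le _ hadj))
      have hpow : g * monomial a (1 : K) ∈ (Ideal.span {X u, X v} : Ideal _) ^ t :=
        Ideal.pow_right_mono hJle t hg
      rw [mem_span_pair_iff]
      intro m hm
      by_contra hcon
      push_neg at hcon
      have hsup : m + a ∈ (g * monomial a (1 : K)).support := by
        rw [mem_support_iff, coeff_mul_monomial, mul_one]
        exact mem_support_iff.mp hm
      have hge := support_mem_pow_span_pair u v t _ hpow _ hsup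
      simp only [Finsupp.add_apply, hcon.1, hcon.2, zero_add] at hge
      omega
    exact (Ideal.radical_mono h1).trans (le_of_eq (radical_span_pair u v))
  · intro p hp
    simp only [Ideal.mem_iInf] at hp
    rw [p.as_sum]
    apply Ideal.sum_mem
    intro m hm
    rw [show (monomial m) (coeff m p) = C (coeff m p) * monomial m (1 : K) by
      rw [C_mul_monomial, mul_one]]
    apply Ideal.mul_mem_left
    apply Ideal.mem_radical_of_pow_mem (m := t)
    apply Ideal.le_radical
    rw [Ideal.mem_colon_span_singleton, monomial_pow, one_pow, monomial_mul, one_mul]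
    apply key_lemma
    intro u v hadj
    simp only [Finsupp.add_apply, Finsupp.smul_apply, smul_eq_mul]
    by_cases hS : a u + a v ≤ t - 1
    · have hmem := hp u v hadj hS
      have := (mem_span_pair_iff u v p).mp hmem m hm
      rcases this with h | h
      · have : t ≤ t * m u := Nat.le_mul_of_pos_right t (Nat.pos_of_ne_zero h)
        omega
      · have : t ≤ t * m v := Nat.le_mul_of_pos_right t (Nat.pos_of_ne_zero h)
        omega
    · omega
end
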